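/- If a preference profile satisfies MaxProp, then every woman other than the unique woman who receives exactly one proposal is matched by the men-proposing DA to her most preferred man. -/

import Mathlib

open scoped Classical

noncomputable section

/-- A two-sided matching market with `n` men and `n` women, each with a complete
strict preference order over the other side. `mpref m k` is man `m`'s `k`-th
favourite woman (0 = top), and `wpref w k` is woman `w`'s `k`-th favourite man. -/
structure Profile (n : ℕ) where
  mpref : Fin n → (Fin n ≃ Fin n)
  wpref : Fin n → (Fin n ≃ Fin n)

namespace Profile

variable {n : ℕ}

/-- rank (0 = best) of woman `w` in man `m`'s preference list -/
def mrank (P : Profile n) (m w : Fin n) : ℕ := ((P.mpref m).symm w : ℕ)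

/-- rank (0 = best) of man `m` in woman `w`'s preference list -/
def wrank (P : Profile n) (w m : Fin n) : ℕ := ((P.wpref w).symm m : ℕ)

/-- man `m` strictly prefers woman `w` to woman `w'` -/
def mPrefers (P : Profile n) (m w w' : Fin n) : Prop := P.mrank m w < P.mrank m w'

/-- woman `w` strictly prefers man `m` to man `m'` -/
def wPrefers (P : Profile n) (w m m' : Fin n) : Prop := P.wrank w m < P.wrank w m'

/-- top choice of man `m` -/
def topM (P : Profile n) (m : Fin n) : Fin n := P.mpref m ⟨0, m.pos⟩

/-- top choice of woman `w` -/
def topW (P : Profile n) (w : Fin n) : Fin n := P.wpref w ⟨0, w.pos⟩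

/-- the profile with the roles of men and women exchanged -/
def swap (P : Profile n) : Profile n := ⟨P.wpref, P.mpref⟩

/-- State of the men-proposing deferred acceptance algorithm:
`next m` = number of proposals man `m` has made so far,
`held w` = the man woman `w` currently tentatively holds (if any). -/
structure DAState (n : ℕ) where
  next : Fin n → ℕ
  held : Fin n → Option (Fin n)

def initState (n : ℕ) : DAState n := ⟨fun _ => 0, fun _ => none⟩

/-- the men currently unmatched (held by no woman) -/
def unmatched (s : DAState n) : Finset (Fin n) :=
  Finset.univ.filter fun m => ∀ w : Fin n, s.held w ≠ some m

/-- the woman man `m` proposes to next: his most preferred woman among those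
who have not rejected him yet -/
def target (P : Profile n) (s : DAState n) (m : Fin n) : Fin n :=
  P.mpref m ⟨s.next m % n, Nat.mod_lt _ m.pos⟩

/-- the men proposing to woman `w` in the current round -/
def proposers (P : Profile n) (s : DAState n) (w : Fin n) : Finset (Fin n) :=
  (unmatched s).filter fun m => target P s m = w

/-- one round of the men-proposing deferred acceptance algorithm: every
unmatched man proposes to his favourite woman who has not rejected him yet,
and every woman tentatively holds her favourite among her current partner
and the new proposers, rejecting the rest -/
def step (P : Profile n) (s : DAState n) : DAState n where
  next := fun m => if m ∈ unmatched s then s.next m + 1 else s.next m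
  held := fun w => ((proposers P s w ∪ (s.held w).toFinset).toList).argmin (P.wrank w)

/-- the state after `k` rounds of men-proposing deferred acceptance -/
def stateAt (P : Profile n) (k : ℕ) : DAState n := (step P)^[k] (initState n)

/-- the final state of men-proposing deferred acceptance
(`n * n + 1` iterations is always enough to reach the fixed point) -/
def finalState (P : Profile n) : DAState n := stateAt P (n * n + 1)

/-- total number of proposals made during the men-proposing DA -/
def totalProposals (P : Profile n) : ℕ := ∑ m : Fin n, (finalState P).next m

/-- number of rounds of the men-proposing DA (rounds in which some proposal is made) -/
def rounds (P : Profile n) : ℕ :=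
  ((Finset.range (n * n + 1)).filter fun k => (unmatched (stateAt P k)).Nonempty).card

/-- total number of proposals received by woman `w` during the men-proposing DA -/
def proposalsTo (P : Profile n) (w : Fin n) : ℕ :=
  ∑ k ∈ Finset.range (n * n + 1), (proposers P (stateAt P k) w).card

/-- man `m` proposes to woman `w` at some point during the men-proposing DA -/
def proposedTo (P : Profile n) (m w : Fin n) : Prop :=
  ∃ k < n * n + 1, m ∈ proposers P (stateAt P k) w

/-- the men-proposing DA makes the maximum possible number `n² - n + 1` of proposals -/
def MaxProp (P : Profile n) : Prop := P.totalProposals = n * n + 1 - n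

/-- the men-proposing DA takes the maximum possible number `n² - 2n + 2` of rounds -/
def MaxRou (P : Profile n) : Prop := P.rounds = n * n + 2 - 2 * n

/-- a matching (a bijection man ↦ woman) is stable iff no man-woman pair mutually
prefer each other to their assigned partners -/
def Stable (P : Profile n) (μ : Fin n ≃ Fin n) : Prop :=
  ¬ ∃ (m w : Fin n), P.mPrefers m w (μ m) ∧ P.wPrefers w m (μ.symm w)

/-- the profile admits a unique stable matching -/
def USM (P : Profile n) : Prop := ∃! μ : Fin n ≃ Fin n, P.Stable μ

/-- the sequential preference condition of Eeckhout (2000) -/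
def SPC (P : Profile n) : Prop :=
  ∃ σ τ : Equiv.Perm (Fin n), ∀ i j : Fin n, i < j →
    P.mPrefers (σ i) (τ i) (τ j) ∧ P.wPrefers (τ i) (σ i) (σ j)

/-- the no crossing condition of Clark (2006) -/
def NCC (P : Profile n) : Prop :=
  ∃ σ τ : Equiv.Perm (Fin n), ∀ i j k l : Fin n, i < j → k < l →
    (P.mPrefers (σ i) (τ l) (τ k) → P.mPrefers (σ j) (τ l) (τ k)) ∧
    (P.wPrefers (τ k) (σ j) (σ i) → P.wPrefers (τ l) (σ j) (σ i))

end Profile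

namespace Profile

variable {n : ℕ}

lemma mem_unmatched {s : DAState n} {m : Fin n} :
    m ∈ unmatched s ↔ ∀ w, s.held w ≠ some m := by
  simp [unmatched]

lemma mem_proposers {P : Profile n} {s : DAState n} {m w : Fin n} :
    m ∈ proposers P s w ↔ m ∈ unmatched s ∧ target P s m = w := by
  unfold proposers; exact Finset.mem_filter

lemma next_step (P : Profile n) (s : DAState n) (m : Fin n) :
    (step P s).next m = if m ∈ unmatched s then s.next m + 1 else s.next m := rfl

lemma held_step (P : Profile n) (s : DAState n) (w : Fin n) :
    (step P s).held w =
      ((proposers P s w ∪ (s.held w).toFinset).toList).argmin (P.wrank w) := rfl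

lemma next_step_le (P : Profile n) (s : DAState n) (m : Fin n) :
    s.next m ≤ (step P s).next m := by
  rw [next_step]; split <;> omega

lemma stateAt_succ (P : Profile n) (k : ℕ) :
    stateAt P (k + 1) = step P (stateAt P k) := by
  unfold stateAt; rw [Function.iterate_succ_apply']

lemma next_mono (P : Profile n) (m : Fin n) {k k' : ℕ} (h : k ≤ k') :
    (stateAt P k).next m ≤ (stateAt P k').next m := by
  induction k', h using Nat.le_induction with
  | base => exact le_rfl
  | succ k' hk ih => rw [stateAt_succ]; exact ih.trans (next_step_le P _ m)

/-- Invariant of the DA algorithm. -/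
def Inv (P : Profile n) (s : DAState n) : Prop :=
  (∀ m, s.next m ≤ n) ∧
  (∀ w m, s.held w = some m → ((P.mpref m).symm w : ℕ) + 1 = s.next m) ∧
  (∀ m w, ((P.mpref m).symm w : ℕ) < s.next m →
    ∃ m', s.held w = some m' ∧ P.wrank w m' ≤ P.wrank w m)

lemma next_lt_of_unmatched {P : Profile n} {s : DAState n} (hI : Inv P s) {m : Fin n}
    (hm : m ∈ unmatched s) : s.next m < n := by
  obtain ⟨ha, hb, hc⟩ := hI
  rcases Nat.lt_or_ge (s.next m) n with hlt | hge
  · exact hlt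
  have hn : s.next m = n := le_antisymm (ha m) hge
  have hold : ∀ w : Fin n, ∃ m', s.held w = some m' := by
    intro w
    obtain ⟨m', hm', -⟩ := hc m w (by rw [hn]; exact ((P.mpref m).symm w).isLt)
    exact ⟨m', hm'⟩
  choose f hf using hold
  have finj : Function.Injective f := by
    intro w w' he
    have h1 := hb w (f w) (hf w)
    have h2 := hb w' (f w') (hf w')
    rw [he] at h1
    have hveq : (P.mpref (f w')).symm w = (P.mpref (f w')).symm w' := Fin.ext (by omega)
    exact (P.mpref (f w')).symm.injective hveq
  obtain ⟨w, hw⟩ := (Finite.injective_iff_surjective.mp finj) m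
  exact absurd (hw ▸ hf w) (mem_unmatched.mp hm w)

lemma rank_eq_of_mem_proposers {P : Profile n} {s : DAState n} (hI : Inv P s) {m w : Fin n}
    (hm : m ∈ proposers P s w) : ((P.mpref m).symm w : ℕ) = s.next m := by
  obtain ⟨hu, ht⟩ := mem_proposers.mp hm
  have hlt := next_lt_of_unmatched hI hu
  have hfin : (⟨s.next m % n, Nat.mod_lt _ m.pos⟩ : Fin n) = ⟨s.next m, hlt⟩ :=
    Fin.ext (Nat.mod_eq_of_lt hlt)
  unfold target at ht
  rw [hfin] at ht
  have h2 : (P.mpref m).symm w = ⟨s.next m, hlt⟩ := by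
    rw [← ht, Equiv.symm_apply_apply]
  rw [h2]

lemma step_held_of_mem {P : Profile n} {s : DAState n} {w a : Fin n}
    (ha : a ∈ proposers P s w ∪ (s.held w).toFinset) :
    ∃ m', (step P s).held w = some m' ∧ P.wrank w m' ≤ P.wrank w a := by
  have hmem : a ∈ (proposers P s w ∪ (s.held w).toFinset).toList := Finset.mem_toList.mpr ha
  cases hargmin : ((proposers P s w ∪ (s.held w).toFinset).toList).argmin (P.wrank w) with
  | none =>
    rw [List.argmin_eq_none] at hargmin
    rw [hargmin] at hmem
    exact absurd hmem (List.not_mem_nil (a := a))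
  | some m' =>
    refine ⟨m', by rw [held_step]; exact hargmin, ?_⟩
    exact List.le_of_mem_argmin hmem (Option.mem_def.mpr hargmin)

lemma inv_step {P : Profile n} {s : DAState n} (hI : Inv P s) : Inv P (step P s) := by
  obtain ⟨ha, hb, hc⟩ := hI
  have hI' : Inv P s := ⟨ha, hb, hc⟩
  refine ⟨?_, ?_, ?_⟩
  · intro m
    rw [next_step]
    split
    · exact next_lt_of_unmatched hI' ‹_›
    · exact ha m
  · intro w m hm
    have hmem : m ∈ proposers P s w ∪ (s.held w).toFinset := by
      have h1 : m ∈ (proposers P s w ∪ (s.held w).toFinset).toList :=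
        List.argmin_mem (f := P.wrank w) (Option.mem_def.mpr ((held_step P s w) ▸ hm))
      exact Finset.mem_toList.mp h1
    rw [Finset.mem_union] at hmem
    rcases hmem with hp | hh
    · have hu := (mem_proposers.mp hp).1
      have hr := rank_eq_of_mem_proposers hI' hp
      rw [next_step, if_pos hu]
      omega
    · rw [Option.mem_toFinset, Option.mem_def] at hh
      have hnu : m ∉ unmatched s := fun hcon => (mem_unmatched.mp hcon w) hh
      rw [next_step, if_neg hnu]
      exact hb w m hh
  · intro m w hlt
    rw [next_step] at hlt
    by_cases hu : m ∈ unmatched s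
    · rw [if_pos hu] at hlt
      rcases Nat.lt_succ_iff_lt_or_eq.mp hlt with hcase | hcase
      · obtain ⟨m', hm', hle⟩ := hc m w hcase
        obtain ⟨m'', h1, h2⟩ := step_held_of_mem (P := P)
          (Finset.mem_union_right _ (Option.mem_toFinset.mpr (Option.mem_def.mpr hm')))
        exact ⟨m'', h1, h2.trans hle⟩
      · have hltn := next_lt_of_unmatched hI' hu
        have hfin : (⟨s.next m % n, Nat.mod_lt _ m.pos⟩ : Fin n) = (P.mpref m).symm w :=
          Fin.ext (by simp only [Fin.val_mk]; rw [Nat.mod_eq_of_lt hltn]; omega)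
        have hp : m ∈ proposers P s w := by
          rw [mem_proposers]
          refine ⟨hu, ?_⟩
          unfold target
          rw [hfin, Equiv.apply_symm_apply]
        obtain ⟨m'', h1, h2⟩ := step_held_of_mem (Finset.mem_union_left _ hp)
        exact ⟨m'', h1, h2⟩
    · rw [if_neg hu] at hlt
      obtain ⟨m', hm', hle⟩ := hc m w hlt
      obtain ⟨m'', h1, h2⟩ := step_held_of_mem (P := P)
        (Finset.mem_union_right _ (Option.mem_toFinset.mpr (Option.mem_def.mpr hm')))
      exact ⟨m'', h1, h2.trans hle⟩

lemma inv_stateAt (P : Profile n) (k : ℕ) : Inv P (stateAt P k) := by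
  induction k with
  | zero =>
    refine ⟨fun m => Nat.zero_le n, fun w m hm => ?_, fun m w hlt => ?_⟩
    · simp [stateAt, initState] at hm
    · simp [stateAt, initState] at hlt
  | succ k ih => rw [stateAt_succ]; exact inv_step ih

lemma next_stateAt_sum (P : Profile n) (m : Fin n) (K : ℕ) :
    (stateAt P K).next m =
      ∑ k ∈ Finset.range K, (if m ∈ unmatched (stateAt P k) then 1 else 0) := by
  induction K with
  | zero => simp [stateAt, initState]
  | succ K ih =>
    rw [stateAt_succ, next_step, Finset.sum_range_succ, ← ih]
    by_cases hu : m ∈ unmatched (stateAt P K) <;> simp [hu]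

lemma card_unmatched_eq_sum (P : Profile n) (s : DAState n) :
    (unmatched s).card = ∑ w : Fin n, (proposers P s w).card := by
  rw [Finset.card_eq_sum_card_fiberwise
    (f := target P s) (t := Finset.univ) (fun m _ => Finset.mem_univ _)]
  rfl

lemma totalProposals_eq (P : Profile n) :
    P.totalProposals = ∑ w : Fin n, P.proposalsTo w := by
  unfold totalProposals proposalsTo finalState
  calc ∑ m : Fin n, (stateAt P (n * n + 1)).next m
      = ∑ m : Fin n, ∑ k ∈ Finset.range (n * n + 1),
          (if m ∈ unmatched (stateAt P k) then 1 else 0) :=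
        Finset.sum_congr rfl fun m _ => next_stateAt_sum P m _
    _ = ∑ k ∈ Finset.range (n * n + 1), ∑ m : Fin n,
          (if m ∈ unmatched (stateAt P k) then 1 else 0) := Finset.sum_comm
    _ = ∑ k ∈ Finset.range (n * n + 1), (unmatched (stateAt P k)).card := by
        refine Finset.sum_congr rfl fun k _ => ?_
        simp [Finset.sum_ite_mem, Finset.univ_inter]
    _ = ∑ k ∈ Finset.range (n * n + 1), ∑ w : Fin n,
          (proposers P (stateAt P k) w).card :=
        Finset.sum_congr rfl fun k _ => card_unmatched_eq_sum P _
    _ = ∑ w : Fin n, ∑ k ∈ Finset.range (n * n + 1),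
          (proposers P (stateAt P k) w).card := Finset.sum_comm

lemma not_mem_proposers_later (P : Profile n) (w : Fin n) {k k' : ℕ} (h : k < k')
    {m : Fin n} (hm : m ∈ proposers P (stateAt P k) w) :
    m ∉ proposers P (stateAt P k') w := by
  intro hm'
  have h1 := rank_eq_of_mem_proposers (inv_stateAt P k) hm
  have h2 := rank_eq_of_mem_proposers (inv_stateAt P k') hm'
  have h3 : (stateAt P (k + 1)).next m = (stateAt P k).next m + 1 := by
    rw [stateAt_succ, next_step, if_pos (mem_proposers.mp hm).1]
  have h4 := next_mono P m (show k + 1 ≤ k' from h)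
  omega

lemma proposers_pairwise_disjoint (P : Profile n) (w : Fin n) :
    ∀ k ∈ Finset.range (n * n + 1), ∀ k' ∈ Finset.range (n * n + 1), k ≠ k' →
      Disjoint (proposers P (stateAt P k) w) (proposers P (stateAt P k') w) := by
  intro k _ k' _ hne
  rw [Finset.disjoint_left]
  intro m hm hm'
  rcases Nat.lt_or_ge k k' with hlt | hge
  · exact not_mem_proposers_later P w hlt hm hm'
  · exact not_mem_proposers_later P w (lt_of_le_of_ne hge (Ne.symm hne)) hm' hm

lemma proposalsTo_eq_card_biUnion (P : Profile n) (w : Fin n) :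
    P.proposalsTo w = ((Finset.range (n * n + 1)).biUnion
      fun k => proposers P (stateAt P k) w).card :=
  (Finset.card_biUnion (proposers_pairwise_disjoint P w)).symm

lemma proposalsTo_le (P : Profile n) (w : Fin n) : P.proposalsTo w ≤ n := by
  rw [proposalsTo_eq_card_biUnion]
  calc _ ≤ (Finset.univ : Finset (Fin n)).card := Finset.card_le_univ _
    _ = n := by simp

lemma all_proposed (P : Profile n) (w : Fin n) (hw : P.proposalsTo w = n) (m : Fin n) :
    ∃ k < n * n + 1, m ∈ proposers P (stateAt P k) w := by
  have hcard : ((Finset.range (n * n + 1)).biUnion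
      fun k => proposers P (stateAt P k) w).card = Fintype.card (Fin n) := by
    rw [← proposalsTo_eq_card_biUnion, hw, Fintype.card_fin]
  have huniv := Finset.eq_univ_of_card _ hcard
  have hm : m ∈ (Finset.range (n * n + 1)).biUnion
      fun k => proposers P (stateAt P k) w := huniv ▸ Finset.mem_univ m
  rw [Finset.mem_biUnion] at hm
  obtain ⟨k, hk, hmk⟩ := hm
  exact ⟨k, Finset.mem_range.mp hk, hmk⟩

lemma held_top_of_all (P : Profile n) (w : Fin n)
    (hall : ∀ m : Fin n, ∃ k < n * n + 1, m ∈ proposers P (stateAt P k) w) :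
    (P.finalState).held w = some (P.topW w) := by
  obtain ⟨ha, hb, hc⟩ := inv_stateAt P (n * n + 1)
  have hrank : ∀ m : Fin n, ((P.mpref m).symm w : ℕ) < (stateAt P (n * n + 1)).next m := by
    intro m
    obtain ⟨k, hk, hmk⟩ := hall m
    have h1 := rank_eq_of_mem_proposers (inv_stateAt P k) hmk
    have h3 : (stateAt P (k + 1)).next m = (stateAt P k).next m + 1 := by
      rw [stateAt_succ, next_step, if_pos (mem_proposers.mp hmk).1]
    have h4 := next_mono P m (show k + 1 ≤ n * n + 1 from hk)
    omega
  obtain ⟨m', hm', hle0⟩ := hc (P.topW w) w (hrank _)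
  have h0 : P.wrank w (P.topW w) = 0 := by
    unfold wrank topW
    rw [Equiv.symm_apply_apply]
  rw [h0, Nat.le_zero] at hle0
  have hfin : (P.wpref w).symm m' = ⟨0, w.pos⟩ := Fin.ext hle0
  have hm'eq : m' = P.topW w := by
    unfold topW
    rw [← hfin, Equiv.apply_symm_apply]
  rw [← hm'eq]
  exact hm'

end Profile

/-- Under MaxProp, every woman other than the one receiving exactly one proposal
is matched by the men-proposing DA to her most preferred man. -/
theorem maxProp_women_get_top (n : ℕ) (P : Profile n) (h : P.MaxProp)
    (wn : Fin n) (hwn : P.proposalsTo wn = 1) :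
    ∀ w : Fin n, w ≠ wn → (P.finalState).held w = some (P.topW w) := by
  intro w hw
  have hn : 0 < n := wn.pos
  have hnn : n ≤ n * n := Nat.le_mul_of_pos_left n hn
  have hsum : ∑ w' : Fin n, P.proposalsTo w' = n * n + 1 - n := by
    rw [← Profile.totalProposals_eq]; exact h
  have hsplit := Finset.add_sum_erase Finset.univ P.proposalsTo (Finset.mem_univ wn)
  have hcard : (Finset.univ.erase wn).card = n - 1 := by
    rw [Finset.card_erase_of_mem (Finset.mem_univ wn), Finset.card_univ, Fintype.card_fin]
  have hwE : w ∈ Finset.univ.erase wn := Finset.mem_erase.mpr ⟨hw, Finset.mem_univ w⟩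
  have hwtop : P.proposalsTo w = n := by
    by_contra hne
    have hlt : ∑ w' ∈ Finset.univ.erase wn, P.proposalsTo w' <
        ∑ _w' ∈ Finset.univ.erase wn, n :=
      Finset.sum_lt_sum (fun i _ => Profile.proposalsTo_le P i)
        ⟨w, hwE, lt_of_le_of_ne (Profile.proposalsTo_le P w) hne⟩
    rw [Finset.sum_const, hcard, smul_eq_mul, Nat.sub_one_mul] at hlt
    omega
  exact Profile.held_top_of_all P w (Profile.all_proposed P w hwtop)
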